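/- Let m be an odd positive integer and let G be the dihedral group of order 2m. Then every abelian fixed-point-free endomorphism of G is trivial (sends every element to 1). -/

import Mathlib

/-- For `m` odd, every abelian fixed-point-free endomorphism of the dihedral
group of order `2m` is trivial. -/
theorem dihedral_odd_abelian_fpf_endomorphism_trivial
    (m : ℕ) (hm : Odd m) (φ : DihedralGroup m →* DihedralGroup m)
    (hab : ∀ a b : DihedralGroup m, φ a * φ b = φ b * φ a)
    (hfpf : ∀ x : DihedralGroup m, φ x = x → x = 1) :
    ∀ x : DihedralGroup m, φ x = 1 := by
  have hm0 : NeZero m := ⟨by rintro rfl; simp at hm⟩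
  have h2 : IsUnit (2 : ZMod m) := by
    rw [show ((2 : ZMod m) = ((2 : ℕ) : ZMod m)) by push_cast; ring,
      ZMod.isUnit_iff_coprime]
    exact Nat.coprime_two_left.mpr hm
  have hsq : ∀ i : ZMod m, φ (.sr i) * φ (.sr i) = 1 := by
    intro i
    rw [← map_mul, DihedralGroup.sr_mul_self, map_one]
  have hsym : ∀ i : ZMod m, φ (.sr i) = φ (.sr (-i)) := by
    intro i
    have h1 : (DihedralGroup.sr i : DihedralGroup m) = .sr 0 * .r i := by
      rw [DihedralGroup.sr_mul_r, zero_add]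
    have h2 : (DihedralGroup.sr (-i) : DihedralGroup m) = .r i * .sr 0 := by
      rw [DihedralGroup.r_mul_sr, zero_sub]
    rw [h1, h2, map_mul, map_mul, hab]
  have hr2 : ∀ i : ZMod m, φ (.r (2 * i)) = 1 := by
    intro i
    have h1 : (DihedralGroup.r (2 * i) : DihedralGroup m) = .sr (-i) * .sr i := by
      rw [DihedralGroup.sr_mul_sr]; ring_nf
    rw [h1, map_mul, ← hsym, hsq]
  have hr : ∀ j : ZMod m, φ (.r j) = 1 := by
    intro j
    obtain ⟨u, hu⟩ := h2
    have : 2 * ((↑u⁻¹ : ZMod m) * j) = j := by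
      rw [← mul_assoc, ← hu, u.mul_inv, one_mul]
    rw [← this]; exact hr2 _
  have hj0 : ∀ j : ZMod m, j + j = 0 → j = 0 := by
    intro j hj
    have h2j : (2 : ZMod m) * j = 0 := by rw [two_mul]; exact hj
    obtain ⟨u, hu⟩ := h2
    calc j = ↑u⁻¹ * ((2 : ZMod m) * j) := by rw [← hu, ← mul_assoc, u.inv_mul, one_mul]
    _ = 0 := by rw [h2j, mul_zero]
  intro x
  match x with
  | .r j => exact hr j
  | .sr i =>
    rcases h : φ (.sr i) with j | k
    · have := hsq i
      rw [h, DihedralGroup.r_mul_r] at this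
      rw [DihedralGroup.one_def] at this ⊢
      have hj : j + j = 0 := by injection this
      rw [hj0 j hj]
    · exfalso
      have hik : (DihedralGroup.sr i : DihedralGroup m) = .sr k * .r (i - k) := by
        rw [DihedralGroup.sr_mul_r, add_sub_cancel]
      rw [hik, map_mul, hr, mul_one] at h
      have := hfpf _ h
      rw [DihedralGroup.one_def] at this
      cases this
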